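/- Let P = {p_1,...,p_n} and Q = {q_1,...,q_n} be orthonormal sets in R^d with 2n < d, and suppose there is a unit vector ĉ with Σ_i |⟨p_i, ĉ⟩| − Σ_i |⟨q_i, ĉ⟩| > (1/2)√n. Then for 0 < z ≤ 2 there exists a unit vector c with Σ_{i=1}^n (2 − 2|⟨q_i,c⟩|)^{z/2} − Σ_{i=1}^n (2 − 2|⟨p_i,c⟩|)^{z/2} ≥ 2^{z/2}·(z/8)·√n − 2^{z/2}·(z/4)·(1 − z/2). -/

import Mathlib

open scoped RealInnerProductSpace

lemma bern_upper {x s : ℝ} (hx1 : x ≤ 1) (hs0 : 0 ≤ s) (hs1 : s ≤ 1) :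
    (1 - x) ^ s ≤ 1 - s * x := by
  have := rpow_one_add_le_one_add_mul_self (s := -x) (by linarith) hs0 hs1
  rw [← sub_eq_add_neg] at this
  linarith [this]

lemma bern_lower {x s : ℝ} (hx0 : 0 ≤ x) (hx1 : x ≤ 1/2) (hs0 : 0 < s) (hs1 : s ≤ 1) :
    1 - s * x - 2 * s * (1 - s) * x ^ 2 ≤ (1 - x) ^ s := by
  have hx1' : (0:ℝ) < 1 - x := by linarith
  have hden : (0:ℝ) < 1 - (1 - s) * x := by nlinarith
  have h1 : (1 - x) ^ (1 - s) ≤ 1 - (1 - s) * x :=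
    bern_upper (by linarith) (by linarith) (by linarith)
  have h1pos : (0:ℝ) < (1 - x) ^ (1 - s) := Real.rpow_pos_of_pos hx1' _
  have key : (1 - x) / (1 - (1 - s) * x) ≤ (1 - x) ^ s := by
    have : (1 - x) ^ s = (1 - x) / (1 - x) ^ (1 - s) := by
      rw [eq_div_iff (ne_of_gt h1pos), ← Real.rpow_add hx1']
      norm_num
    rw [this]
    exact div_le_div_of_nonneg_left hx1'.le h1pos h1
  refine le_trans ?_ key
  rw [le_div_iff₀ hden]
  nlinarith [sq_nonneg x, mul_nonneg (mul_nonneg hs0.le (sub_nonneg.2 hs1)) (sq_nonneg x),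
    mul_nonneg (mul_nonneg (mul_nonneg hs0.le (sub_nonneg.2 hs1)) (sq_nonneg x))
      (by nlinarith : (0:ℝ) ≤ 1 - 2 * (1 - s) * x)]

lemma exists_c {d n : ℕ} (hd : 2 * n < d)
    (p q : Fin n → EuclideanSpace ℝ (Fin d))
    (chat : EuclideanSpace ℝ (Fin d)) (hchat : ‖chat‖ = 1) :
    ∃ c : EuclideanSpace ℝ (Fin d), ‖c‖ = 1 ∧
      (∀ i, ⟪p i, c⟫ = ⟪p i, chat⟫ / 2) ∧ (∀ i, ⟪q i, c⟫ = ⟪q i, chat⟫ / 2) := by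
  classical
  set K : Submodule ℝ (EuclideanSpace ℝ (Fin d)) :=
    Submodule.span ℝ (Set.range (Sum.elim p q)) with hKdef
  have hpK : ∀ i, p i ∈ K := fun i => Submodule.subset_span ⟨Sum.inl i, rfl⟩
  have hqK : ∀ i, q i ∈ K := fun i => Submodule.subset_span ⟨Sum.inr i, rfl⟩
  have hKfin : Module.finrank ℝ K ≤ 2 * n := by
    have := finrank_range_le_card (R := ℝ) (Sum.elim p q)
    simpa [Set.finrank, Fintype.card_sum, two_mul] using this
  have hKne : K ≠ ⊤ := by
    intro h
    have : Module.finrank ℝ K = d := by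
      rw [h, finrank_top, finrank_euclideanSpace, Fintype.card_fin]
    omega
  have hKbot : Kᗮ ≠ ⊥ := by
    rwa [Ne, Submodule.orthogonal_eq_bot_iff]
  obtain ⟨v, hvK, hv0⟩ := Submodule.exists_mem_ne_zero_of_ne_bot hKbot
  set u : EuclideanSpace ℝ (Fin d) := ‖v‖⁻¹ • v with hu
  have hunorm : ‖u‖ = 1 := by
    rw [hu, norm_smul, norm_inv, norm_norm, inv_mul_cancel₀ (norm_ne_zero_iff.2 hv0)]
  have huK : u ∈ Kᗮ := Submodule.smul_mem _ _ hvK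
  set w : EuclideanSpace ℝ (Fin d) :=
    ((1:ℝ)/2) • (K.orthogonalProjectionOnto chat : EuclideanSpace ℝ (Fin d)) with hw
  have hwK : w ∈ K := Submodule.smul_mem _ _ (K.orthogonalProjectionOnto chat).2
  have hwnorm : ‖w‖ ≤ 1/2 := by
    rw [hw, norm_smul]
    have h1 : ‖(K.orthogonalProjectionOnto chat : EuclideanSpace ℝ (Fin d))‖ ≤ 1 := by
      have := (K.orthogonalProjectionOnto).le_opNorm chat
      calc ‖(K.orthogonalProjectionOnto chat : EuclideanSpace ℝ (Fin d))‖
          ≤ ‖K.orthogonalProjectionOnto‖ * ‖chat‖ := this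
        _ ≤ 1 := by rw [hchat, mul_one]; exact Submodule.orthogonalProjectionOnto_norm_le K
    have : |(1:ℝ)/2| = 1/2 := by norm_num
    rw [Real.norm_eq_abs, this]
    linarith
  set r : ℝ := Real.sqrt (1 - ‖w‖^2) with hr
  have hw2 : ‖w‖^2 ≤ 1/4 := by nlinarith [norm_nonneg w]
  have hr2 : r^2 = 1 - ‖w‖^2 := Real.sq_sqrt (by nlinarith)
  refine ⟨w + r • u, ?_, ?_, ?_⟩
  · have horth : ⟪w, r • u⟫ = 0 := by
      rw [real_inner_smul_right,
        Submodule.inner_right_of_mem_orthogonal hwK huK, mul_zero]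
    have hru : ‖r • u‖^2 = r^2 := by
      rw [norm_smul r u, hunorm, mul_one, Real.norm_eq_abs, sq_abs]
    have h2 : ‖w + r • u‖^2 = 1 := by
      rw [@norm_add_sq_real, horth, hru, hr2]; ring
    nlinarith [norm_nonneg (w + r • u)]
  · intro i
    have h1 : ⟪p i, u⟫ = 0 :=
      Submodule.inner_right_of_mem_orthogonal (hpK i) huK
    have h2 : ⟪p i, chat - (K.orthogonalProjectionOnto chat : EuclideanSpace ℝ (Fin d))⟫ = 0 :=
      Submodule.inner_right_of_mem_orthogonal (hpK i)
        (Submodule.sub_starProjection_mem_orthogonal (K := K) chat)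
    rw [inner_sub_right] at h2
    rw [inner_add_right, real_inner_smul_right (p i) u r, h1, mul_zero, add_zero, hw,
      real_inner_smul_right]
    linarith
  · intro i
    have h1 : ⟪q i, u⟫ = 0 :=
      Submodule.inner_right_of_mem_orthogonal (hqK i) huK
    have h2 : ⟪q i, chat - (K.orthogonalProjectionOnto chat : EuclideanSpace ℝ (Fin d))⟫ = 0 :=
      Submodule.inner_right_of_mem_orthogonal (hqK i)
        (Submodule.sub_starProjection_mem_orthogonal (K := K) chat)
    rw [inner_sub_right] at h2
    rw [inner_add_right, real_inner_smul_right (q i) u r, h1, mul_zero, add_zero, hw,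
      real_inner_smul_right]
    linarith

theorem stmt_8 {d n : ℕ} (hd : 2 * n < d)
    (p q : Fin n → EuclideanSpace ℝ (Fin d))
    (hp : Orthonormal ℝ p) (hq : Orthonormal ℝ q)
    (chat : EuclideanSpace ℝ (Fin d)) (hchat : ‖chat‖ = 1)
    (hgap : (1/2) * Real.sqrt n < (∑ i, |⟪p i, chat⟫|) - ∑ i, |⟪q i, chat⟫|)
    (z : ℝ) (hz0 : 0 < z) (hz2 : z ≤ 2) :
    ∃ c : EuclideanSpace ℝ (Fin d), ‖c‖ = 1 ∧
      (2:ℝ)^(z/2) * (z/8) * Real.sqrt n - (2:ℝ)^(z/2) * (z/4) * (1 - z/2)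
        ≤ (∑ i, (2 - 2 * |⟪q i, c⟫|) ^ (z/2)) - ∑ i, (2 - 2 * |⟪p i, c⟫|) ^ (z/2) := by
  obtain ⟨c, hc1, hpc, hqc⟩ := exists_c hd p q chat hchat
  refine ⟨c, hc1, ?_⟩
  have hs0 : (0:ℝ) < z/2 := by linarith
  have hs1 : z/2 ≤ 1 := by linarith
  have hAle : ∀ i, |⟪p i, c⟫| ≤ 1/2 := by
    intro i
    rw [hpc i, abs_div]
    have h := abs_real_inner_le_norm (p i) chat
    rw [hp.1 i, hchat, one_mul] at h
    rw [abs_of_pos (by norm_num : (0:ℝ) < 2)]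
    linarith
  have hBle : ∀ i, |⟪q i, c⟫| ≤ 1/2 := by
    intro i
    rw [hqc i, abs_div]
    have h := abs_real_inner_le_norm (q i) chat
    rw [hq.1 i, hchat, one_mul] at h
    rw [abs_of_pos (by norm_num : (0:ℝ) < 2)]
    linarith
  -- rewrite each term via 2^(z/2)
  have hsplit : ∀ x : ℝ, |x| ≤ 1/2 →
      (2 - 2 * |x|) ^ (z/2) = (2:ℝ)^(z/2) * (1 - |x|) ^ (z/2) := by
    intro x hx
    rw [show (2 - 2*|x|) = 2*(1-|x|) by ring,
      Real.mul_rpow (by norm_num) (by linarith [abs_nonneg x])]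
  have hQsum : (∑ i, (2 - 2 * |⟪q i, c⟫|) ^ (z/2))
      = (2:ℝ)^(z/2) * ∑ i, (1 - |⟪q i, c⟫|) ^ (z/2) := by
    rw [Finset.mul_sum]
    exact Finset.sum_congr rfl fun i _ => hsplit _ (hBle i)
  have hPsum : (∑ i, (2 - 2 * |⟪p i, c⟫|) ^ (z/2))
      = (2:ℝ)^(z/2) * ∑ i, (1 - |⟪p i, c⟫|) ^ (z/2) := by
    rw [Finset.mul_sum]
    exact Finset.sum_congr rfl fun i _ => hsplit _ (hAle i)
  -- upper bound for p-sum
  have hP : ∑ i, (1 - |⟪p i, c⟫|) ^ (z/2)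
      ≤ (n:ℝ) - (z/2) * ∑ i, |⟪p i, c⟫| := by
    have h := Finset.sum_le_sum (s := Finset.univ)
      (fun i _ => bern_upper (x := |⟪p i, c⟫|) (by linarith [hAle i]) hs0.le hs1)
    calc ∑ i, (1 - |⟪p i, c⟫|) ^ (z/2) ≤ ∑ i, (1 - (z/2) * |⟪p i, c⟫|) := h
      _ = (n:ℝ) - (z/2) * ∑ i, |⟪p i, c⟫| := by
          rw [Finset.sum_sub_distrib, Finset.sum_const, ← Finset.mul_sum]
          simp
  -- lower bound for q-sum
  have hQ : (n:ℝ) - (z/2) * (∑ i, |⟪q i, c⟫|)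
        - 2 * (z/2) * (1 - z/2) * (∑ i, |⟪q i, c⟫| ^ 2)
      ≤ ∑ i, (1 - |⟪q i, c⟫|) ^ (z/2) := by
    have h := Finset.sum_le_sum (s := Finset.univ)
      (fun i _ => bern_lower (x := |⟪q i, c⟫|) (abs_nonneg _) (hBle i) hs0 hs1)
    calc (n:ℝ) - (z/2) * (∑ i, |⟪q i, c⟫|)
          - 2 * (z/2) * (1 - z/2) * (∑ i, |⟪q i, c⟫| ^ 2)
        = ∑ i, (1 - (z/2) * |⟪q i, c⟫| - 2 * (z/2) * (1 - z/2) * |⟪q i, c⟫| ^ 2) := by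
          rw [Finset.sum_sub_distrib, Finset.sum_sub_distrib, ← Finset.mul_sum, ← Finset.mul_sum]
          simp
      _ ≤ _ := h
  -- Bessel
  have hBessel : ∑ i, |⟪q i, c⟫| ^ 2 ≤ 1/4 := by
    have h := hq.sum_inner_products_le (𝕜 := ℝ) chat (s := Finset.univ)
    have h2 : ∑ i, ⟪q i, chat⟫ ^ 2 ≤ 1 := by
      simpa [Real.norm_eq_abs, sq_abs, hchat] using h
    have h3 : ∀ i : Fin n, |⟪q i, c⟫| ^ 2 = ⟪q i, chat⟫ ^ 2 / 4 := by
      intro i; rw [sq_abs, hqc i]; ring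
    calc ∑ i, |⟪q i, c⟫| ^ 2 = ∑ i, ⟪q i, chat⟫ ^ 2 / 4 :=
          Finset.sum_congr rfl fun i _ => h3 i
      _ = (∑ i, ⟪q i, chat⟫ ^ 2) / 4 := by rw [Finset.sum_div]
      _ ≤ 1/4 := by linarith
  -- gap
  have hgap2 : Real.sqrt n / 4 < (∑ i, |⟪p i, c⟫|) - ∑ i, |⟪q i, c⟫| := by
    have e1 : ∑ i, |⟪p i, c⟫| = (∑ i, |⟪p i, chat⟫|) / 2 := by
      rw [Finset.sum_div]
      refine Finset.sum_congr rfl fun i _ => ?_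
      rw [hpc i, abs_div, abs_of_pos (by norm_num : (0:ℝ) < 2)]
    have e2 : ∑ i, |⟪q i, c⟫| = (∑ i, |⟪q i, chat⟫|) / 2 := by
      rw [Finset.sum_div]
      refine Finset.sum_congr rfl fun i _ => ?_
      rw [hqc i, abs_div, abs_of_pos (by norm_num : (0:ℝ) < 2)]
    rw [e1, e2]
    linarith
  -- conclude
  have hT : (0:ℝ) < (2:ℝ)^(z/2) := Real.rpow_pos_of_pos (by norm_num) _
  rw [hQsum, hPsum]
  have key : (z/8) * Real.sqrt n - (z/4) * (1 - z/2)
      ≤ (∑ i, (1 - |⟪q i, c⟫|) ^ (z/2)) - ∑ i, (1 - |⟪p i, c⟫|) ^ (z/2) := by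
    have hz1 : (0:ℝ) ≤ 2 * (z/2) * (1 - z/2) := by nlinarith
    nlinarith [mul_le_mul_of_nonneg_left hBessel hz1,
      mul_lt_mul_of_pos_left hgap2 hs0]
  nlinarith [mul_le_mul_of_nonneg_left key hT.le]
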